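/- Every finite simple graph G admits an edge labelling ℓ : E(G) → {1,2,3} such that for every integer x ≥ 1 the subgraph of G induced by the set S_x is a forest (contains no cycle). -/

import Mathlib

open Finset

/-- The product of the labels assigned by `ℓ` to the edges incident to `v`
(an empty product equals `1`). -/
def vertexProd {V : Type*} [Fintype V] [DecidableEq V] (G : SimpleGraph V)
    [DecidableRel G.Adj] (ℓ : Sym2 V → ℕ) (v : V) : ℕ :=
  ∏ e ∈ G.incidenceFinset v, ℓ e

namespace Stmt2Aux
set_option linter.unusedSectionVars false

variable {V : Type*} [Fintype V] [DecidableEq V]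

noncomputable def ord (v : V) : ℕ := ((Fintype.equivFin V) v : ℕ)

lemma ord_injective : Function.Injective (ord (V := V)) := by
  intro a b h
  exact (Fintype.equivFin V).injective (Fin.val_injective h)

lemma ord_lt_card (v : V) : ord v < Fintype.card V := ((Fintype.equivFin V) v).isLt

variable (G : SimpleGraph V) [DecidableRel G.Adj]

/-- number of `2`-labelled edges at `v` -/
def aCnt (W : V → V → ℕ) (v : V) : ℕ := #((G.neighborFinset v).filter fun u => W v u = 2)

/-- number of `3`-labelled edges at `v` -/
def bCnt (W : V → V → ℕ) (v : V) : ℕ := #((G.neighborFinset v).filter fun u => W v u = 3)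

def phi (W : V → V → ℕ) (v : V) : ℤ := (aCnt G W v : ℤ) - (bCnt G W v : ℤ)

/-- anchor of an integer: itself if even, one less otherwise -/
def anch (t : ℤ) : ℤ := if Even t then t else t - 1

noncomputable def alp (W : V → V → ℕ) (v : V) : ℤ := anch (phi G W v)

noncomputable def bad (W : V → V → ℕ) (v : V) : Finset V :=
  (G.neighborFinset v).filter fun u => ord u < ord v ∧ alp G W u = alp G W v

/-- The invariant of the sequential construction after processing the
first `j` vertices. -/
def Good (j : ℕ) (W : V → V → ℕ) : Prop :=
  (∀ u v, W u v = W v u) ∧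
  (∀ u v, W u v = 1 ∨ (G.Adj u v ∧ ord u < j ∧ ord v < j ∧ (W u v = 2 ∨ W u v = 3))) ∧
  (∀ v, ord v < j → (bad G W v).card ≤ 1)

variable {G}

lemma anch_even {t : ℤ} (h : Even t) : anch t = t := if_pos h
lemma anch_odd {t : ℤ} (h : ¬ Even t) : anch t = t - 1 := if_neg h

lemma even_sub_two {t : ℤ} : Even (t - 2) ↔ Even t := by simp [Int.even_sub]

lemma anch_sub_two (t : ℤ) : anch (t - 2) = anch t - 2 := by
  unfold anch
  by_cases h : Even t
  · rw [if_pos h, if_pos (even_sub_two.mpr h)]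
  · rw [if_neg h, if_neg (fun hc => h (even_sub_two.mp hc))]; ring

lemma anch_sub_two_mul (t : ℤ) (i : ℕ) : anch (t - 2 * i) = anch t - 2 * i := by
  induction i with
  | zero => simp
  | succ i ih =>
      have h2 : t - 2 * (i + 1 : ℕ) = (t - 2 * i) - 2 := by push_cast; ring
      rw [h2, anch_sub_two, ih]; push_cast; ring

lemma anch_add_one_of_even {t : ℤ} (h : Even t) : anch (t + 1) = anch t := by
  have h1 : ¬ Even (t + 1) := by simp [Int.even_add_one, h]
  rw [anch_odd h1, anch_even h]; ring

lemma anch_sub_one_of_odd {t : ℤ} (h : ¬ Even t) : anch (t - 1) = anch t := by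
  have h1 : Even (t - 1) := by
    rcases Int.even_or_odd t with he | ho
    · exact absurd he h
    · rcases ho with ⟨k, hk⟩; exact ⟨k, by omega⟩
  rw [anch_even h1, anch_odd h]

/-- The pigeonhole choice lemma. -/
lemma choice_lemma (B Bp Bm : Finset V) (f : V → ℤ)
    (hd : Disjoint Bp Bm) (hu : Bp ∪ Bm = B) :
    ∃ t : ℤ, ((0 ≤ t ∧ t ≤ Bp.card) ∨ (t < 0 ∧ -t ≤ Bm.card)) ∧
      #(B.filter fun u => f u = anch t) ≤ 1 := by
  classical
  set k := B.card with hk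
  set P := Bp.card with hP
  set N := Bm.card with hN
  have hPN : P + N = k := by rw [hk, ← hu, card_union_of_disjoint hd]
  by_contra hcon
  push_neg at hcon
  have hbig : ∀ i ∈ Finset.range (k / 2 + 1),
      2 ≤ #(B.filter fun u => f u = anch ((P : ℤ) - 2 * i)) := by
    intro i hi
    rw [Finset.mem_range] at hi
    have hik : 2 * i ≤ k := by omega
    have ht : ((0:ℤ) ≤ (P : ℤ) - 2 * i ∧ (P : ℤ) - 2 * i ≤ P) ∨
        ((P : ℤ) - 2 * i < 0 ∧ -((P : ℤ) - 2 * i) ≤ N) := by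
      by_cases h0 : (0:ℤ) ≤ (P : ℤ) - 2 * i
      · exact Or.inl ⟨h0, by omega⟩
      · push_neg at h0
        exact Or.inr ⟨h0, by omega⟩
    have := hcon ((P : ℤ) - 2 * i) ht
    omega
  have hdisj : ∀ i ∈ Finset.range (k / 2 + 1), ∀ j ∈ Finset.range (k / 2 + 1), i ≠ j →
      Disjoint (B.filter fun u => f u = anch ((P : ℤ) - 2 * i))
               (B.filter fun u => f u = anch ((P : ℤ) - 2 * j)) := by
    intro i _ j _ hij
    rw [Finset.disjoint_left]
    intro u hu1 hu2
    rw [Finset.mem_filter] at hu1 hu2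
    have h1 := hu1.2
    have h2 := hu2.2
    rw [anch_sub_two_mul] at h1 h2
    have : (i : ℤ) = (j : ℤ) := by omega
    exact hij (by exact_mod_cast this)
  have hsub : (Finset.range (k / 2 + 1)).biUnion
      (fun i => B.filter fun u => f u = anch ((P : ℤ) - 2 * i)) ⊆ B := by
    intro u hu
    rw [Finset.mem_biUnion] at hu
    obtain ⟨i, _, hu⟩ := hu
    exact (Finset.mem_filter.mp hu).1
  have hcard := Finset.card_le_card hsub
  rw [Finset.card_biUnion hdisj] at hcard
  have hge : 2 * (k / 2 + 1) ≤
      ∑ i ∈ Finset.range (k / 2 + 1), #(B.filter fun u => f u = anch ((P : ℤ) - 2 * i)) := by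
    calc 2 * (k / 2 + 1) = ∑ _i ∈ Finset.range (k / 2 + 1), 2 := by
          rw [Finset.sum_const, Finset.card_range]; ring
      _ ≤ _ := Finset.sum_le_sum hbig
  have : 2 * (k / 2 + 1) ≤ k := le_trans hge hcard
  omega

/-- the updated labelling -/
def upd (w : V) (D : Finset V) (c : ℕ) (W : V → V → ℕ) : V → V → ℕ :=
  fun u v => if (u = w ∧ v ∈ D) ∨ (v = w ∧ u ∈ D) then c else W u v

section Step

variable {j : ℕ} {W : V → V → ℕ} (hW : Good G j W) {w : V} (hwj : ord w = j)
  (D : Finset V) (c : ℕ) (hc : c = 2 ∨ c = 3)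
  (hD : ∀ u ∈ D, G.Adj w u ∧ ord u < j ∧ (c = 2 → Even (phi G W u)) ∧
    (c = 3 → ¬ Even (phi G W u)))

include hW hwj hc hD

lemma upd_eq_of_ne {u v : V} (h1 : ¬ (u = w ∧ v ∈ D)) (h2 : ¬ (v = w ∧ u ∈ D)) :
    upd w D c W u v = W u v := by
  unfold upd; rw [if_neg]; tauto

lemma w_not_mem_D : w ∉ D := by
  intro h
  exact absurd hwj (by have := (hD w h).2.1; omega)

lemma W_eq_one_at_w (u : V) : W w u = 1 := by
  rcases hW.2.1 w u with h | h
  · exact h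
  · exact absurd hwj (by have := h.2.1; omega)

lemma upd_at_w (u : V) (hu : u ≠ w) : upd w D c W w u = if u ∈ D then c else 1 := by
  unfold upd
  by_cases h : u ∈ D
  · rw [if_pos (Or.inl ⟨rfl, h⟩), if_pos h]
  · rw [if_neg (by tauto), if_neg h]
    exact W_eq_one_at_w hW hwj D c hc hD u

lemma alp_upd_of_not_mem {v : V} (hv : v ≠ w) (hvD : v ∉ D) :
    phi G (upd w D c W) v = phi G W v := by
  have hpt : ∀ u, upd w D c W v u = W v u := by
    intro u
    exact upd_eq_of_ne hW hwj D c hc hD (by tauto) (by tauto)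
  have e2 : (G.neighborFinset v).filter (fun u => upd w D c W v u = 2)
      = (G.neighborFinset v).filter (fun u => W v u = 2) :=
    filter_congr (fun u _ => by rw [hpt u])
  have e3 : (G.neighborFinset v).filter (fun u => upd w D c W v u = 3)
      = (G.neighborFinset v).filter (fun u => W v u = 3) :=
    filter_congr (fun u _ => by rw [hpt u])
  unfold phi aCnt bCnt
  rw [e2, e3]

lemma phi_upd_of_mem {v : V} (hvD : v ∈ D) :
    phi G (upd w D c W) v = (if c = 2 then phi G W v + 1 else phi G W v - 1) := by
  have hvw : v ≠ w := fun h => w_not_mem_D hW hwj D c hc hD (h ▸ hvD)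
  have hwN : w ∈ G.neighborFinset v := by
    rw [SimpleGraph.mem_neighborFinset]
    exact ((hD v hvD).1).symm
  have hWvw : W v w = 1 := by rw [hW.1]; exact W_eq_one_at_w hW hwj D c hc hD v
  have hupd : upd w D c W v w = c := by
    unfold upd; rw [if_pos (Or.inr ⟨rfl, hvD⟩)]
  have hpt : ∀ u, u ≠ w → upd w D c W v u = W v u := by
    intro u hu
    exact upd_eq_of_ne hW hwj D c hc hD (by tauto) (fun h => hu h.1)
  have h2 : (G.neighborFinset v).filter (fun u => upd w D c W v u = 2)
      = (if c = 2 then insert w ((G.neighborFinset v).filter (fun u => W v u = 2))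
          else (G.neighborFinset v).filter (fun u => W v u = 2)) := by
    by_cases h : c = 2
    · rw [if_pos h]
      ext u
      simp only [mem_filter, mem_insert]
      constructor
      · rintro ⟨hn, he⟩
        by_cases huw : u = w
        · exact Or.inl huw
        · exact Or.inr ⟨hn, by rw [← hpt u huw]; exact he⟩
      · rintro (rfl | ⟨hn, he⟩)
        · exact ⟨hwN, by rw [hupd, h]⟩
        · refine ⟨hn, ?_⟩
          have huw : u ≠ w := fun hh => by
            rw [hh] at he; rw [hWvw] at he; omega
          rw [hpt u huw]; exact he
    · rw [if_neg h]
      apply filter_congr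
      intro u hn
      by_cases huw : u = w
      · subst huw
        rw [hupd, hWvw]
        constructor <;> intro hh <;> omega
      · rw [hpt u huw]
  have h3 : (G.neighborFinset v).filter (fun u => upd w D c W v u = 3)
      = (if c = 3 then insert w ((G.neighborFinset v).filter (fun u => W v u = 3))
          else (G.neighborFinset v).filter (fun u => W v u = 3)) := by
    by_cases h : c = 3
    · rw [if_pos h]
      ext u
      simp only [mem_filter, mem_insert]
      constructor
      · rintro ⟨hn, he⟩
        by_cases huw : u = w
        · exact Or.inl huw
        · exact Or.inr ⟨hn, by rw [← hpt u huw]; exact he⟩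
      · rintro (rfl | ⟨hn, he⟩)
        · exact ⟨hwN, by rw [hupd, h]⟩
        · refine ⟨hn, ?_⟩
          have huw : u ≠ w := fun hh => by
            rw [hh] at he; rw [hWvw] at he; omega
          rw [hpt u huw]; exact he
    · rw [if_neg h]
      apply filter_congr
      intro u hn
      by_cases huw : u = w
      · subst huw
        rw [hupd, hWvw]
        constructor <;> intro hh <;> omega
      · rw [hpt u huw]
  have hw2 : w ∉ (G.neighborFinset v).filter (fun u => W v u = 2) := by
    simp [mem_filter, hWvw]
  have hw3 : w ∉ (G.neighborFinset v).filter (fun u => W v u = 3) := by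
    simp [mem_filter, hWvw]
  unfold phi aCnt bCnt
  rcases hc with h | h
  · rw [h] at h2 h3 ⊢
    rw [if_pos rfl] at h2
    rw [if_neg (by omega)] at h3
    rw [h2, h3, card_insert_of_notMem hw2]
    simp only [if_pos rfl]
    push_cast; ring
  · rw [h] at h2 h3 ⊢
    rw [if_neg (by omega)] at h2
    rw [if_pos rfl] at h3
    rw [h2, h3, card_insert_of_notMem hw3]
    simp only [if_neg (by omega : ¬ (3:ℕ) = 2)]
    push_cast; ring

lemma alp_upd_of_mem {v : V} (hvD : v ∈ D) :
    alp G (upd w D c W) v = alp G W v := by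
  unfold alp
  rw [phi_upd_of_mem hW hwj D c hc hD hvD]
  rcases hc with h | h
  · rw [h]; simp only [if_pos rfl]
    exact anch_add_one_of_even (((hD v hvD).2.2.1) h)
  · rw [h]; simp only [if_neg (by omega : ¬ (3:ℕ) = 2)]
    exact anch_sub_one_of_odd (((hD v hvD).2.2.2) h)

lemma alp_upd_of_ne_w {v : V} (hv : v ≠ w) :
    alp G (upd w D c W) v = alp G W v := by
  by_cases hvD : v ∈ D
  · exact alp_upd_of_mem hW hwj D c hc hD hvD
  · unfold alp; rw [alp_upd_of_not_mem hW hwj D c hc hD hv hvD]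

lemma phi_upd_at_w :
    phi G (upd w D c W) w = (if c = 2 then (D.card : ℤ) else -(D.card : ℤ)) := by
  have hDsub : D ⊆ G.neighborFinset w := by
    intro u hu; rw [SimpleGraph.mem_neighborFinset]; exact (hD u hu).1
  have key : ∀ u ∈ G.neighborFinset w, upd w D c W w u = if u ∈ D then c else 1 := by
    intro u hn
    have hu : u ≠ w := by
      intro h; subst h
      rw [SimpleGraph.mem_neighborFinset] at hn
      exact G.irrefl hn
    exact upd_at_w hW hwj D c hc hD u hu
  have h2 : (G.neighborFinset w).filter (fun u => upd w D c W w u = 2)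
      = if c = 2 then D else ∅ := by
    by_cases h : c = 2
    · rw [if_pos h]
      ext u
      simp only [mem_filter]
      constructor
      · rintro ⟨hn, he⟩
        rw [key u hn] at he
        by_cases huD : u ∈ D
        · exact huD
        · rw [if_neg huD] at he; omega
      · intro huD
        refine ⟨hDsub huD, ?_⟩
        rw [key u (hDsub huD), if_pos huD, h]
    · rw [if_neg h]
      ext u
      simp only [mem_filter, notMem_empty, iff_false]
      rintro ⟨hn, he⟩
      rw [key u hn] at he
      by_cases huD : u ∈ D
      · rw [if_pos huD] at he; rcases hc with h'|h' <;> omega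
      · rw [if_neg huD] at he; omega
  have h3 : (G.neighborFinset w).filter (fun u => upd w D c W w u = 3)
      = if c = 3 then D else ∅ := by
    by_cases h : c = 3
    · rw [if_pos h]
      ext u
      simp only [mem_filter]
      constructor
      · rintro ⟨hn, he⟩
        rw [key u hn] at he
        by_cases huD : u ∈ D
        · exact huD
        · rw [if_neg huD] at he; omega
      · intro huD
        refine ⟨hDsub huD, ?_⟩
        rw [key u (hDsub huD), if_pos huD, h]
    · rw [if_neg h]
      ext u
      simp only [mem_filter, notMem_empty, iff_false]
      rintro ⟨hn, he⟩
      rw [key u hn] at he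
      by_cases huD : u ∈ D
      · rw [if_pos huD] at he; rcases hc with h'|h' <;> omega
      · rw [if_neg huD] at he; omega
  unfold phi aCnt bCnt
  rcases hc with h | h
  · subst h
    rw [h2, h3, if_pos rfl, if_pos rfl, if_neg (by omega)]
    simp
  · subst h
    rw [h2, h3, if_pos rfl, if_neg (by omega), if_neg (by omega)]
    simp

lemma bad_upd_of_old {v : V} (hv : ord v < j) :
    bad G (upd w D c W) v = bad G W v := by
  unfold bad
  apply filter_congr
  intro u _
  by_cases ho : ord u < ord v
  · have huw : u ≠ w := fun h => by subst h; omega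
    have hvw : v ≠ w := fun h => by subst h; omega
    rw [alp_upd_of_ne_w hW hwj D c hc hD huw, alp_upd_of_ne_w hW hwj D c hc hD hvw]
  · constructor <;> (rintro ⟨h1, h2⟩; exact absurd h1 ho)

lemma bad_upd_at_w :
    bad G (upd w D c W) w = (G.neighborFinset w).filter
      (fun u => ord u < j ∧ alp G W u =
        anch (if c = 2 then (D.card : ℤ) else -(D.card : ℤ))) := by
  unfold bad
  apply filter_congr
  intro u _
  rw [hwj]
  by_cases ho : ord u < j
  · have huw : u ≠ w := fun h => by subst h; omega
    rw [alp_upd_of_ne_w hW hwj D c hc hD huw]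
    unfold alp
    rw [phi_upd_at_w hW hwj D c hc hD]
  · constructor <;> (rintro ⟨h1, h2⟩; exact absurd h1 ho)

lemma good_upd
    (hsmall : #((G.neighborFinset w).filter
      (fun u => ord u < j ∧ alp G W u =
        anch (if c = 2 then (D.card : ℤ) else -(D.card : ℤ)))) ≤ 1) :
    Good G (j + 1) (upd w D c W) := by
  refine ⟨?_, ?_, ?_⟩
  · intro u v
    unfold upd
    by_cases h : (u = w ∧ v ∈ D) ∨ (v = w ∧ u ∈ D)
    · rw [if_pos h, if_pos (by tauto)]
    · rw [if_neg h, if_neg (by tauto)]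
      exact hW.1 u v
  · intro u v
    unfold upd
    by_cases h : (u = w ∧ v ∈ D) ∨ (v = w ∧ u ∈ D)
    · rw [if_pos h]
      right
      rcases h with ⟨rfl, hv⟩ | ⟨rfl, hu⟩
      · exact ⟨(hD v hv).1, by omega, by have := (hD v hv).2.1; omega, by tauto⟩
      · exact ⟨((hD u hu).1).symm, by have := (hD u hu).2.1; omega, by omega, by tauto⟩
    · rw [if_neg h]
      rcases hW.2.1 u v with h1 | h1
      · exact Or.inl h1
      · exact Or.inr ⟨h1.1, by omega, by omega, h1.2.2.2⟩
  · intro v hv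
    rcases Nat.lt_succ_iff_lt_or_eq.mp hv with h | h
    · rw [bad_upd_of_old hW hwj D c hc hD h]
      exact hW.2.2 v h
    · have hvw : v = w := ord_injective (by rw [h, hwj])
      subst hvw
      rw [bad_upd_at_w hW hwj D c hc hD]
      exact hsmall

end Step

lemma good_step {j : ℕ} {W : V → V → ℕ} (hW : Good G j W) :
    ∃ W', Good G (j + 1) W' := by
  classical
  by_cases hex : ∃ w : V, ord w = j
  · obtain ⟨w, hwj⟩ := hex
    set B := (G.neighborFinset w).filter (fun u => ord u < j) with hB
    set Bp := B.filter (fun u => Even (phi G W u)) with hBp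
    set Bm := B.filter (fun u => ¬ Even (phi G W u)) with hBm
    have hd : Disjoint Bp Bm := by
      rw [Finset.disjoint_left]
      intro u h1 h2
      rw [hBp, Finset.mem_filter] at h1
      rw [hBm, Finset.mem_filter] at h2
      exact h2.2 h1.2
    have hu : Bp ∪ Bm = B := filter_union_filter_not_eq _ B
    obtain ⟨t, hrange, hsmall⟩ := choice_lemma B Bp Bm (alp G W) hd hu
    have memB : ∀ u ∈ B, G.Adj w u ∧ ord u < j := by
      intro u h
      rw [hB, Finset.mem_filter, SimpleGraph.mem_neighborFinset] at h
      exact ⟨h.1, h.2⟩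
    rcases hrange with ⟨ht0, htP⟩ | ⟨ht0, htN⟩
    · obtain ⟨D, hDsub, hDcard⟩ := Finset.exists_subset_card_eq
        (show t.toNat ≤ Bp.card by omega)
      have hD : ∀ u ∈ D, G.Adj w u ∧ ord u < j ∧
          ((2:ℕ) = 2 → Even (phi G W u)) ∧ ((2:ℕ) = 3 → ¬ Even (phi G W u)) := by
        intro u hu'
        have h1 := hDsub hu'
        rw [hBp, Finset.mem_filter] at h1
        exact ⟨(memB u h1.1).1, (memB u h1.1).2, fun _ => h1.2, fun h => by omega⟩
      have hcast : ((D.card : ℤ)) = t := by rw [hDcard]; omega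
      refine ⟨upd w D 2 W, good_upd hW hwj D 2 (Or.inl rfl) hD ?_⟩
      rw [if_pos rfl, hcast]
      calc #((G.neighborFinset w).filter (fun u => ord u < j ∧ alp G W u = anch t))
          = #(B.filter (fun u => alp G W u = anch t)) := by
            rw [hB, Finset.filter_filter]
        _ ≤ 1 := hsmall
    · obtain ⟨D, hDsub, hDcard⟩ := Finset.exists_subset_card_eq
        (show (-t).toNat ≤ Bm.card by omega)
      have hD : ∀ u ∈ D, G.Adj w u ∧ ord u < j ∧
          ((3:ℕ) = 2 → Even (phi G W u)) ∧ ((3:ℕ) = 3 → ¬ Even (phi G W u)) := by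
        intro u hu'
        have h1 := hDsub hu'
        rw [hBm, Finset.mem_filter] at h1
        exact ⟨(memB u h1.1).1, (memB u h1.1).2, fun h => by omega, fun _ => h1.2⟩
      have hcast : (-(D.card : ℤ)) = t := by rw [hDcard]; omega
      refine ⟨upd w D 3 W, good_upd hW hwj D 3 (Or.inr rfl) hD ?_⟩
      rw [if_neg (by omega), hcast]
      calc #((G.neighborFinset w).filter (fun u => ord u < j ∧ alp G W u = anch t))
          = #(B.filter (fun u => alp G W u = anch t)) := by
            rw [hB, Finset.filter_filter]
        _ ≤ 1 := hsmall
  · refine ⟨W, hW.1, ?_, ?_⟩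
    · intro u v
      rcases hW.2.1 u v with h | h
      · exact Or.inl h
      · exact Or.inr ⟨h.1, by omega, by omega, h.2.2.2⟩
    · intro v hv
      have : ord v < j := by
        rcases Nat.lt_succ_iff_lt_or_eq.mp hv with h | h
        · exact h
        · exact absurd ⟨v, h⟩ hex
      exact hW.2.2 v this

variable (G) in
lemma good_zero : Good G 0 (fun _ _ => 1) :=
  ⟨fun _ _ => rfl, fun _ _ => Or.inl rfl, fun v hv => by omega⟩

variable (G) in
lemma exists_good (j : ℕ) : ∃ W, Good G j W := by
  induction j with
  | zero => exact ⟨_, good_zero G⟩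
  | succ j ih => obtain ⟨W, hW⟩ := ih; exact good_step hW

variable (G) in
lemma incidence_eq_image (v : V) :
    G.incidenceFinset v = (G.neighborFinset v).image (fun u => s(v, u)) := by
  ext e
  rw [SimpleGraph.mem_incidenceFinset]
  constructor
  · intro he
    induction e with
    | _ a b =>
      rw [Finset.mem_image]
      rcases he with ⟨hadj, hv⟩
      rw [SimpleGraph.mem_edgeSet] at hadj
      rw [Sym2.mem_iff] at hv
      rcases hv with rfl | rfl
      · exact ⟨b, by rw [SimpleGraph.mem_neighborFinset]; exact hadj, rfl⟩
      · exact ⟨a, by rw [SimpleGraph.mem_neighborFinset]; exact hadj.symm, Sym2.eq_swap⟩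
  · intro he
    rw [Finset.mem_image] at he
    obtain ⟨u, hu, rfl⟩ := he
    rw [SimpleGraph.mem_neighborFinset] at hu
    exact ⟨SimpleGraph.mem_edgeSet _ |>.mpr hu, Sym2.mem_mk_left v u⟩

variable (G) in
lemma vertexProd_eq_prod (W : V → V → ℕ) (hsym : ∀ a b, W a b = W b a) (v : V) :
    vertexProd G (Sym2.lift ⟨W, hsym⟩) v = ∏ u ∈ G.neighborFinset v, W v u := by
  unfold vertexProd
  rw [incidence_eq_image, Finset.prod_image ?inj]
  · simp
  · intro a _ b _ h
    exact Sym2.congr_right.mp h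

variable (G) in
lemma prod_neighbors (W : V → V → ℕ) (v : V)
    (hlab : ∀ u ∈ G.neighborFinset v, W v u = 1 ∨ W v u = 2 ∨ W v u = 3) :
    ∏ u ∈ G.neighborFinset v, W v u = 2 ^ aCnt G W v * 3 ^ bCnt G W v := by
  classical
  unfold aCnt bCnt
  set s := G.neighborFinset v with hs
  rw [← Finset.prod_filter_mul_prod_filter_not s (fun u => W v u = 2)]
  have h2 : ∏ u ∈ s.filter (fun u => W v u = 2), W v u
      = 2 ^ #(s.filter fun u => W v u = 2) := by
    rw [Finset.prod_congr rfl (fun u hu => (Finset.mem_filter.mp hu).2), Finset.prod_const]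
  have hsplit : s.filter (fun u => ¬ W v u = 2)
      = (s.filter (fun u => W v u = 3)) ∪ (s.filter (fun u => W v u = 1)) := by
    ext u
    simp only [Finset.mem_filter, Finset.mem_union]
    constructor
    · rintro ⟨hu, hne⟩
      rcases hlab u hu with h | h | h
      · exact Or.inr ⟨hu, h⟩
      · exact absurd h hne
      · exact Or.inl ⟨hu, h⟩
    · rintro (⟨hu, h⟩ | ⟨hu, h⟩) <;> exact ⟨hu, by omega⟩
  have hdisj : Disjoint (s.filter (fun u => W v u = 3)) (s.filter (fun u => W v u = 1)) := by
    rw [Finset.disjoint_left]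
    intro u h1 h2
    rw [Finset.mem_filter] at h1 h2
    omega
  rw [hsplit, Finset.prod_union hdisj]
  have h3 : ∏ u ∈ s.filter (fun u => W v u = 3), W v u
      = 3 ^ #(s.filter fun u => W v u = 3) := by
    rw [Finset.prod_congr rfl (fun u hu => (Finset.mem_filter.mp hu).2), Finset.prod_const]
  have h1 : ∏ u ∈ s.filter (fun u => W v u = 1), W v u = 1 := by
    rw [Finset.prod_congr rfl (fun u hu => (Finset.mem_filter.mp hu).2), Finset.prod_const,
      one_pow]
  rw [h2, h3, h1, mul_one]

lemma two_three_inj {a b a' b' : ℕ} (h : 2 ^ a * 3 ^ b = 2 ^ a' * 3 ^ b') :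
    a = a' ∧ b = b' := by
  have h2 : Nat.Prime 2 := Nat.prime_two
  have h3 : Nat.Prime 3 := Nat.prime_three
  have hne2 : (2:ℕ) ^ a ≠ 0 := by positivity
  have hne3 : (3:ℕ) ^ b ≠ 0 := by positivity
  have hne2' : (2:ℕ) ^ a' ≠ 0 := by positivity
  have hne3' : (3:ℕ) ^ b' ≠ 0 := by positivity
  have hf := congrArg Nat.factorization h
  rw [Nat.factorization_mul hne2 hne3, Nat.factorization_mul hne2' hne3',
    Nat.Prime.factorization_pow h2, Nat.Prime.factorization_pow h3,
    Nat.Prime.factorization_pow h2, Nat.Prime.factorization_pow h3] at hf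
  constructor
  · have := congrArg (fun f => f 2) hf
    simpa using this
  · have := congrArg (fun f => f 3) hf
    simpa using this

/-- In a cycle, the base vertex has two distinct neighbours on the cycle. -/
lemma cycle_two_neighbors {α : Type*} {H : SimpleGraph α} {z : α} {c : H.Walk z z}
    (hc : c.IsCycle) :
    ∃ b d, b ≠ d ∧ H.Adj z b ∧ H.Adj z d ∧ b ∈ c.support ∧ d ∈ c.support := by
  cases c with
  | nil => exact absurd hc (SimpleGraph.Walk.IsCycle.not_of_nil)
  | @cons _ b _ h q =>
    have hlen := hc.three_le_length
    rw [SimpleGraph.Walk.length_cons] at hlen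
    have hqnil : ¬ q.Nil := by
      rw [SimpleGraph.Walk.nil_iff_length_eq]; omega
    have hrnil : ¬ q.reverse.Nil := by
      rw [SimpleGraph.Walk.nil_iff_length_eq, SimpleGraph.Walk.length_reverse]
      rw [SimpleGraph.Walk.nil_iff_length_eq] at hqnil
      exact hqnil
    obtain ⟨d, hzd, r, hqr⟩ := SimpleGraph.Walk.not_nil_iff.mp hrnil
    refine ⟨b, d, ?_, h, hzd, ?_, ?_⟩
    · intro hbd
      have hnodup := hc.isCircuit.isTrail.edges_nodup
      rw [SimpleGraph.Walk.edges_cons] at hnodup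
      rw [List.nodup_cons] at hnodup
      apply hnodup.1
      have hd_mem : s(z, d) ∈ q.reverse.edges := by
        rw [hqr, SimpleGraph.Walk.edges_cons]
        exact List.mem_cons_self
      rw [SimpleGraph.Walk.edges_reverse, List.mem_reverse] at hd_mem
      subst hbd
      exact hd_mem
    · rw [SimpleGraph.Walk.support_cons]
      exact List.mem_cons_of_mem _ q.start_mem_support
    · rw [SimpleGraph.Walk.support_cons]
      apply List.mem_cons_of_mem
      have : d ∈ q.reverse.support := by
        rw [hqr, SimpleGraph.Walk.support_cons]
        exact List.mem_cons_of_mem _ r.start_mem_support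
      rw [SimpleGraph.Walk.support_reverse, List.mem_reverse] at this
      exact this

end Stmt2Aux

/-- Every finite simple graph `G` admits a `3`-labelling of its edges such that for
every `x ≥ 1` the subgraph of `G` induced by `S_x = {v | ρ(v) = x}` is a forest. -/
theorem stmt_2 {V : Type*} [Fintype V] [DecidableEq V] (G : SimpleGraph V)
    [DecidableRel G.Adj] :
    ∃ ℓ : Sym2 V → ℕ,
      (∀ e ∈ G.edgeSet, ℓ e ∈ ({1, 2, 3} : Set ℕ)) ∧
      ∀ x : ℕ, 1 ≤ x →
        (G.induce {v : V | vertexProd G ℓ v = x}).IsAcyclic := by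
  classical
  open Stmt2Aux in
  obtain ⟨W, hW⟩ := Stmt2Aux.exists_good G (Fintype.card V)
  have hWsym : ∀ a b : V, W a b = W b a := hW.1
  refine ⟨Sym2.lift ⟨W, hWsym⟩, ?_, ?_⟩
  · intro e he
    induction e with
    | _ a b =>
      have hval : Sym2.lift ⟨W, hWsym⟩ s(a, b) = W a b := Sym2.lift_mk _ _ _
      rw [hval]
      rcases hW.2.1 a b with h | h
      · rw [h]; exact Set.mem_insert _ _
      · rcases h.2.2.2 with h' | h'
        · rw [h']; right; exact Set.mem_insert _ _
        · rw [h']; right; right; rfl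
  · intro x hx
    set ℓ : Sym2 V → ℕ := Sym2.lift ⟨W, hWsym⟩ with hℓ
    have hlab : ∀ v : V, ∀ u ∈ G.neighborFinset v, W v u = 1 ∨ W v u = 2 ∨ W v u = 3 := by
      intro v u _
      rcases hW.2.1 v u with h | h
      · exact Or.inl h
      · rcases h.2.2.2 with h' | h'
        · exact Or.inr (Or.inl h')
        · exact Or.inr (Or.inr h')
    have hprod : ∀ v : V, vertexProd G ℓ v = 2 ^ aCnt G W v * 3 ^ bCnt G W v := by
      intro v
      rw [hℓ, vertexProd_eq_prod G W hWsym v, prod_neighbors G W v (hlab v)]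
    have halp : ∀ u v : V, vertexProd G ℓ u = vertexProd G ℓ v →
        alp G W u = alp G W v := by
      intro u v h
      rw [hprod u, hprod v] at h
      obtain ⟨ha, hb⟩ := two_three_inj h
      unfold alp phi
      rw [ha, hb]
    have hbad : ∀ v : V, (bad G W v).card ≤ 1 := fun v => hW.2.2 v (ord_lt_card v)
    intro v0 c hc
    set S := {v : V | vertexProd G ℓ v = x} with hS
    -- the vertex of maximal ord on the cycle
    have hsupN : c.support.toFinset.Nonempty :=
      ⟨_, List.mem_toFinset.mpr c.start_mem_support⟩
    obtain ⟨z, hzF, hzmax⟩ := Finset.exists_max_image c.support.toFinset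
      (fun y => ord (y : V)) hsupN
    have hz : z ∈ c.support := List.mem_toFinset.mp hzF
    have hc' := hc.rotate hz
    obtain ⟨b, d, hbd, hzb, hzd, hbS, hdS⟩ := cycle_two_neighbors hc'
    have hrot := SimpleGraph.Walk.support_rotate c z hz
    have hb' : b ∈ c.support := by
      rw [SimpleGraph.Walk.support_eq_cons] at hbS
      rcases List.mem_cons.mp hbS with h | h
      · exact absurd h hzb.ne'
      · exact List.mem_of_mem_tail ((hrot.mem_iff).mp h)
    have hd' : d ∈ c.support := by
      rw [SimpleGraph.Walk.support_eq_cons] at hdS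
      rcases List.mem_cons.mp hdS with h | h
      · exact absurd h hzd.ne'
      · exact List.mem_of_mem_tail ((hrot.mem_iff).mp h)
    -- adjacency in G
    have hGzb : G.Adj (z : V) (b : V) := hzb
    have hGzd : G.Adj (z : V) (d : V) := hzd
    -- ord strictly smaller
    have hordb : ord (b : V) < ord (z : V) := by
      have hle := hzmax b (List.mem_toFinset.mpr hb')
      have hne : (b : V) ≠ (z : V) := fun h =>
        (hzb.ne' (Subtype.ext h)).elim
      exact lt_of_le_of_ne hle (fun h => hne (ord_injective h))
    have hordd : ord (d : V) < ord (z : V) := by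
      have hle := hzmax d (List.mem_toFinset.mpr hd')
      have hne : (d : V) ≠ (z : V) := fun h =>
        (hzd.ne' (Subtype.ext h)).elim
      exact lt_of_le_of_ne hle (fun h => hne (ord_injective h))
    -- all on the cycle have product x
    have hvb : vertexProd G ℓ (b : V) = x := b.2
    have hvd : vertexProd G ℓ (d : V) = x := d.2
    have hvz : vertexProd G ℓ (z : V) = x := z.2
    have hmem_b : (b : V) ∈ bad G W (z : V) := by
      rw [Stmt2Aux.bad, Finset.mem_filter]
      exact ⟨SimpleGraph.mem_neighborFinset _ _ _ |>.mpr hGzb, hordb,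
        halp _ _ (by rw [hvb, hvz])⟩
    have hmem_d : (d : V) ∈ bad G W (z : V) := by
      rw [Stmt2Aux.bad, Finset.mem_filter]
      exact ⟨SimpleGraph.mem_neighborFinset _ _ _ |>.mpr hGzd, hordd,
        halp _ _ (by rw [hvd, hvz])⟩
    have hbdV : (b : V) ≠ (d : V) := fun h => hbd (Subtype.ext h)
    have h2 : 1 < (bad G W (z : V)).card :=
      Finset.one_lt_card.mpr ⟨_, hmem_b, _, hmem_d, hbdV⟩
    exact absurd (hbad (z : V)) (by omega)
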